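/- In the Farey graph, every edge {p/q, r/s} (with |ps - qr| = 1) is contained in exactly two triangles, namely those with third vertex (p+r)/(q+s) and (p-r)/(q-s). -/
import Mathlib


/-- In the Farey graph, every edge is contained in exactly two triangles: given
primitive vectors `v, w` with `|det(v w)| = 1`, the primitive vectors `u` with
`|det(u v)| = 1` and `|det(u w)| = 1` are exactly `±(v + w)` and `±(v - w)`. -/
theorem farey_edge_in_exactly_two_triangles
    (v w : Fin 2 → ℤ) (hv : IsCoprime (v 0) (v 1)) (hw : IsCoprime (w 0) (w 1))
    (hdet : |v 0 * w 1 - v 1 * w 0| = 1) :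
    ∀ u : Fin 2 → ℤ, IsCoprime (u 0) (u 1) →
      ((|u 0 * v 1 - u 1 * v 0| = 1 ∧ |u 0 * w 1 - u 1 * w 0| = 1) ↔
        (u = v + w ∨ u = -(v + w) ∨ u = v - w ∨ u = -(v - w))) := by
  intro u hu
  constructor
  · rintro ⟨ha, hb⟩
    have h0 : u 0 * (v 0 * w 1 - v 1 * w 0) =
        (u 0 * w 1 - u 1 * w 0) * v 0 - (u 0 * v 1 - u 1 * v 0) * w 0 := by ring
    have h1 : u 1 * (v 0 * w 1 - v 1 * w 0) =
        (u 0 * w 1 - u 1 * w 0) * v 1 - (u 0 * v 1 - u 1 * v 0) * w 1 := by ring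
    rcases (abs_eq (by norm_num)).1 ha with ha1 | ha1 <;>
    rcases (abs_eq (by norm_num)).1 hb with hb1 | hb1 <;>
    rcases (abs_eq (by norm_num)).1 hdet with hD1 | hD1 <;>
    rw [ha1, hb1, hD1] at h0 h1 <;>
    first
      | (left; funext i; fin_cases i <;> simp <;> linarith)
      | (right; left; funext i; fin_cases i <;> simp <;> linarith)
      | (right; right; left; funext i; fin_cases i <;> simp <;> linarith)
      | (right; right; right; funext i; fin_cases i <;> simp <;> linarith)
  · rcases (abs_eq (by norm_num)).1 hdet with hD | hD <;>
    rintro (rfl | rfl | rfl | rfl) <;>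
    constructor <;>
    simp only [Pi.add_apply, Pi.neg_apply, Pi.sub_apply] <;>
    rw [abs_eq (by norm_num)] <;>
    first
      | exact Or.inl (by linear_combination hD)
      | exact Or.inl (by linear_combination -hD)
      | exact Or.inr (by linear_combination hD)
      | exact Or.inr (by linear_combination -hD)
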